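/- For any vertices x1, y1, x2, y2 of G, the following polynomial identity holds: F_disj(x1, y1, x2, y2) = F(x1, y1) · F(x2, y2) − Σ_{v ∈ V ∖ ({x1, y1} ∩ {x2, y2})} D_v(x1, y1, x2, y2). -/

import Mathlib

open scoped BigOperators

namespace DSP

variable {V : Type*} [Fintype V] [DecidableEq V]

/-- A path: a nonempty list of distinct vertices in which each consecutive
pair is joined by a directed edge. -/
def IsPath (E : V → V → Prop) (p : List V) : Prop :=
  p ≠ [] ∧ p.Nodup ∧ p.Chain' E

/-- A path from `x` to `y`. -/
def IsPathFrom (E : V → V → Prop) (p : List V) (x y : V) : Prop :=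
  IsPath E p ∧ p.head? = some x ∧ p.getLast? = some y

/-- The (ordered) list of edges of a path. -/
def pathEdges (p : List V) : List (V × V) := p.zip p.tail

/-- The weight of a path: the sum of its edge weights. -/
def pathWeight (ℓ : V → V → ℝ) (p : List V) : ℝ :=
  ((pathEdges p).map fun e => ℓ e.1 e.2).sum

/-- `dist x y` : the minimum weight of a path from `x` to `y`
(`⊤` if there is no such path). -/
noncomputable def dist (E : V → V → Prop) (ℓ : V → V → ℝ) (x y : V) : EReal :=
  sInf {w : EReal | ∃ p : List V, IsPathFrom E p x y ∧ (pathWeight ℓ p : EReal) = w}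

/-- A shortest path from `x` to `y` : a path from `x` to `y` whose weight
equals `dist x y`.  `Π(x, y)` is the set of all such paths. -/
def IsShortestPath (E : V → V → Prop) (ℓ : V → V → ℝ) (p : List V) (x y : V) : Prop :=
  IsPathFrom E p x y ∧ (pathWeight ℓ p : EReal) = dist E ℓ x y

/-- A directed cycle: a closed walk with at least one edge whose internal
vertices are pairwise distinct. -/
def IsCycle (E : V → V → Prop) (p : List V) : Prop :=
  2 ≤ p.length ∧ p.Chain' E ∧ p.head? = p.getLast? ∧ p.tail.Nodup

/-- `G` contains no directed cycle of negative or zero total weight. -/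
def NoNonposCycle (E : V → V → Prop) (ℓ : V → V → ℝ) : Prop :=
  ∀ p : List V, IsCycle E p → 0 < pathWeight ℓ p

/-- `G` is a DAG: it contains no directed cycle. -/
def Acyclic (E : V → V → Prop) : Prop :=
  ∀ p : List V, ¬ IsCycle E p

/-- `x` precedes `y` on the path `p` (`x = y` allowed). -/
def Precedes (p : List V) (x y : V) : Prop :=
  x ∈ p ∧ y ∈ p ∧ p.idxOf x ≤ p.idxOf y

/-- `subpath p x y` : the subpath `p[x, y]` of `p` from `x` to `y`
(for `x` preceding `y` on `p`). -/
def subpath (p : List V) (x y : V) : List V :=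
  (p.take (p.idxOf y + 1)).drop (p.idxOf x)

/-- Concatenation `p · q` of two paths (the last vertex of `p` coinciding
with the first vertex of `q`). -/
def pathConcat (p q : List V) : List V := p ++ q.tail

/-- A vertex is internal to a path if it lies on it and is not an endpoint. -/
def Internal (p : List V) (v : V) : Prop :=
  v ∈ p ∧ p.head? ≠ some v ∧ p.getLast? ≠ some v

/-- Paths `p1` from `x1` to `y1` and `p2` from `x2` to `y2` are internally
vertex-disjoint: they share no vertices except possibly those in
`{x1, y1} ∩ {x2, y2}`. -/
def InternallyDisjoint (p1 : List V) (x1 y1 : V) (p2 : List V) (x2 y2 : V) : Prop :=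
  ∀ u, u ∈ p1 → u ∈ p2 → u ∈ ({x1, y1} ∩ {x2, y2} : Set V)

/-- `(a, b)` is a twin-crossing pair for paths `p1`, `p2`. -/
def TwinCrossingPair (p1 p2 : List V) (a b : V) : Prop :=
  a ≠ b ∧ Precedes p1 a b ∧ Precedes p2 a b ∧ subpath p1 a b ≠ subpath p2 a b

/-- The swap operation `φ_{a,b}(P1, P2)`. -/
def swap (p1 : List V) (x1 y1 : V) (p2 : List V) (x2 y2 : V) (a b : V) :
    List V × List V :=
  (pathConcat (pathConcat (subpath p1 x1 a) (subpath p2 a b)) (subpath p1 b y1),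
   pathConcat (pathConcat (subpath p2 x2 a) (subpath p1 a b)) (subpath p2 b y2))

/-- The graph with vertex `u` deleted. -/
def deleteVertex (E : V → V → Prop) (u : V) : V → V → Prop :=
  fun a b => E a b ∧ a ≠ u ∧ b ≠ u

/-- `u` is distance-critical for `(x, y)` : deleting `u` strictly increases
the distance from `x` to `y`. -/
def DistCritical (E : V → V → Prop) (ℓ : V → V → ℝ) (x y u : V) : Prop :=
  dist E ℓ x y < dist (deleteVertex E u) ℓ x y

/-- `Δ(x, y)` : the distance-critical vertices for `(x, y)` together with the
endpoints `x`, `y`. -/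
def Delta (E : V → V → Prop) (ℓ : V → V → ℝ) (x y : V) : Set V :=
  {u | DistCritical E ℓ x y u} ∪ {x, y}

/-- `δ(x, y) = |Δ(x, y)|`. -/
noncomputable def deltaCard (E : V → V → Prop) (ℓ : V → V → ℝ) (x y : V) : ℕ :=
  (Delta E ℓ x y).ncard

/-- `(a, b)` is a concordant pair for paths `p1` (from `x1` to `y1`) and
`p2` (from `x2` to `y2`). -/
def ConcordantPair (p1 : List V) (x1 y1 : V) (p2 : List V) (x2 y2 : V) (a b : V) : Prop :=
  a ∉ ({x1, y1} ∩ {x2, y2} : Set V) ∧ b ∉ ({x1, y1} ∩ {x2, y2} : Set V) ∧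
  Precedes p1 a b ∧ Precedes p2 a b ∧
  InternallyDisjoint (subpath p1 x1 a) x1 a (subpath p2 x2 a) x2 a ∧
  InternallyDisjoint (subpath p1 b y1) b y1 (subpath p2 b y2) b y2

/-- `𝒞(P1, P2)` : the set of concordant pairs for `(P1, P2)`. -/
def concordantSet (p1 : List V) (x1 y1 : V) (p2 : List V) (x2 y2 : V) : Set (V × V) :=
  {c | ConcordantPair p1 x1 y1 p2 x2 y2 c.1 c.2}

/-- The interaction complexity `γ(P1, P2) = Σ_{(v,w) ∈ 𝒞(P1,P2)} δ(v, w)`. -/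
noncomputable def gamma (E : V → V → Prop) (ℓ : V → V → ℝ)
    (p1 : List V) (x1 y1 : V) (p2 : List V) (x2 y2 : V) : ℕ :=
  ∑ᶠ c ∈ concordantSet p1 x1 y1 p2 x2 y2, deltaCard E ℓ c.1 c.2

/-- `E(x, y)` : the set of edges lying on at least one shortest path
from `x` to `y`. -/
def shortestEdges (E : V → V → Prop) (ℓ : V → V → ℝ) (x y : V) : Set (V × V) :=
  {e | ∃ p : List V, IsShortestPath E ℓ p x y ∧ e ∈ pathEdges p}

section Poly

variable (F : Type*) [Field F] [CharP F 2]

/-- The monomial `f(P) = ∏_{e ∈ E(P)} z_e` of a path. -/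
noncomputable def pathMon (p : List V) : MvPolynomial (V × V) F :=
  ((pathEdges p).map fun e => MvPolynomial.X e).prod

/-- The enumerating polynomial of a collection of paths. -/
noncomputable def enumPoly (S : Set (List V)) : MvPolynomial (V × V) F :=
  ∑ᶠ p ∈ S, pathMon F p

/-- The enumerating polynomial of a collection of pairs of paths. -/
noncomputable def enumPoly2 (S : Set (List V × List V)) : MvPolynomial (V × V) F :=
  ∑ᶠ q ∈ S, pathMon F q.1 * pathMon F q.2

variable (E : V → V → Prop) (ℓ : V → V → ℝ)

/-- `F(x, y)` : the enumerating polynomial of `Π(x, y)`. -/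
noncomputable def Fpoly (x y : V) : MvPolynomial (V × V) F :=
  enumPoly F {p : List V | IsShortestPath E ℓ p x y}

end Poly

variable (E : V → V → Prop) (ℓ : V → V → ℝ)

/-- The collection of internally vertex-disjoint pairs
`(P1, P2) ∈ Π(x1, y1) × Π(x2, y2)`. -/
def disjPairs (x1 y1 x2 y2 : V) : Set (List V × List V) :=
  {q | IsShortestPath E ℓ q.1 x1 y1 ∧ IsShortestPath E ℓ q.2 x2 y2 ∧
       InternallyDisjoint q.1 x1 y1 q.2 x2 y2}

/-- Pairs `(P1, P2) ∈ Π(x1, y1) × Π(x2, y2)` such that `v ∈ V(P1) ∩ V(P2)`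
and the prefix `P1[x1, v]` and the suffix `P2[v, y2]` are internally
vertex-disjoint (defining `H_v`). -/
def HvPairs (v x1 y1 x2 y2 : V) : Set (List V × List V) :=
  {q | IsShortestPath E ℓ q.1 x1 y1 ∧ IsShortestPath E ℓ q.2 x2 y2 ∧
       v ∈ q.1 ∧ v ∈ q.2 ∧
       InternallyDisjoint (subpath q.1 x1 v) x1 v (subpath q.2 v y2) v y2}

/-- Pairs `(P1, P2) ∈ Π(x1, y1) × Π(x2, y2)` such that
`(a, v) ∈ E(P1) ∩ E(P2)` and the prefix `P1[x1, a]` and the suffix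
`P2[v, y2]` are internally vertex-disjoint (defining `H_{av}`). -/
def HavPairs (a v x1 y1 x2 y2 : V) : Set (List V × List V) :=
  {q | IsShortestPath E ℓ q.1 x1 y1 ∧ IsShortestPath E ℓ q.2 x2 y2 ∧
       (a, v) ∈ pathEdges q.1 ∧ (a, v) ∈ pathEdges q.2 ∧
       InternallyDisjoint (subpath q.1 x1 a) x1 a (subpath q.2 v y2) v y2}

/-- Pairs `(P1, P2) ∈ Π(x1, y1) × Π(x2, y2)` such that `v ∈ V(P1) ∩ V(P2)`
and the prefix `P1[x1, v]` is internally vertex-disjoint from both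
`P2[x2, v]` and `P2[v, y2]` (defining `D_v`). -/
def DvPairs (v x1 y1 x2 y2 : V) : Set (List V × List V) :=
  {q | IsShortestPath E ℓ q.1 x1 y1 ∧ IsShortestPath E ℓ q.2 x2 y2 ∧
       v ∈ q.1 ∧ v ∈ q.2 ∧
       InternallyDisjoint (subpath q.1 x1 v) x1 v (subpath q.2 x2 v) x2 v ∧
       InternallyDisjoint (subpath q.1 x1 v) x1 v (subpath q.2 v y2) v y2}

/-- Pairs `(P1, P2) ∈ Π(x1, y1) × Π(x2, y2)` with interaction complexity
`γ(P1, P2) ≤ k` (defining `F_{disj,k}`). -/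
def disjkPairs (k : ℤ) (x1 y1 x2 y2 : V) : Set (List V × List V) :=
  {q | IsShortestPath E ℓ q.1 x1 y1 ∧ IsShortestPath E ℓ q.2 x2 y2 ∧
       (gamma E ℓ q.1 x1 y1 q.2 x2 y2 : ℤ) ≤ k}

/-- Pairs `(P1, P2) ∈ Π(x1, y1) × Π(x2, y2)` with `γ(P1, P2) ≤ k` such that
`(v, w) ∈ 𝒞(P1, P2)` and `(v, w)` is the concordant pair appearing first
along `P1` (defining `D_{v,w,k}`). -/
def DvwkPairs (k : ℤ) (v w x1 y1 x2 y2 : V) : Set (List V × List V) :=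
  {q | IsShortestPath E ℓ q.1 x1 y1 ∧ IsShortestPath E ℓ q.2 x2 y2 ∧
       (gamma E ℓ q.1 x1 y1 q.2 x2 y2 : ℤ) ≤ k ∧
       (v, w) ∈ concordantSet q.1 x1 y1 q.2 x2 y2 ∧
       ∀ c ∈ concordantSet q.1 x1 y1 q.2 x2 y2, q.1.idxOf v ≤ q.1.idxOf c.1}

/-- Pairs `(P1, P2) ∈ Π(x1, y1) × Π(x2, y2)` such that `v` and `w` lie on
both paths with `v` preceding `w` on both, the subpaths `P1[x1, v]` and
`P2[w, y2]` are internally vertex-disjoint, and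
`γ(P1[v, y1], P2[x2, w]) ≤ k` (defining `H_{v,w,k}`). -/
def HvwkPairs (k : ℤ) (v w x1 y1 x2 y2 : V) : Set (List V × List V) :=
  {q | IsShortestPath E ℓ q.1 x1 y1 ∧ IsShortestPath E ℓ q.2 x2 y2 ∧
       Precedes q.1 v w ∧ Precedes q.2 v w ∧
       InternallyDisjoint (subpath q.1 x1 v) x1 v (subpath q.2 w y2) w y2 ∧
       (gamma E ℓ (subpath q.1 v y1) v y1 (subpath q.2 x2 w) x2 w : ℤ) ≤ k}

/-- As `HvwkPairs`, additionally requiring the edge `(a, v)` on both paths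
(disjointness imposed on `P1[x1, a]` and `P2[w, y2]`), defining `H_{av,w,k}`. -/
def HavwkPairs (k : ℤ) (a v w x1 y1 x2 y2 : V) : Set (List V × List V) :=
  {q | IsShortestPath E ℓ q.1 x1 y1 ∧ IsShortestPath E ℓ q.2 x2 y2 ∧
       Precedes q.1 v w ∧ Precedes q.2 v w ∧
       (a, v) ∈ pathEdges q.1 ∧ (a, v) ∈ pathEdges q.2 ∧
       InternallyDisjoint (subpath q.1 x1 a) x1 a (subpath q.2 w y2) w y2 ∧
       (gamma E ℓ (subpath q.1 v y1) v y1 (subpath q.2 x2 w) x2 w : ℤ) ≤ k}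

/-- As `HvwkPairs`, additionally requiring the edge `(w, b)` on both paths
(disjointness imposed on `P1[x1, v]` and `P2[b, y2]`), defining `H_{v,wb,k}`. -/
def HvwbkPairs (k : ℤ) (v w b x1 y1 x2 y2 : V) : Set (List V × List V) :=
  {q | IsShortestPath E ℓ q.1 x1 y1 ∧ IsShortestPath E ℓ q.2 x2 y2 ∧
       Precedes q.1 v w ∧ Precedes q.2 v w ∧
       (w, b) ∈ pathEdges q.1 ∧ (w, b) ∈ pathEdges q.2 ∧
       InternallyDisjoint (subpath q.1 x1 v) x1 v (subpath q.2 b y2) b y2 ∧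
       (gamma E ℓ (subpath q.1 v y1) v y1 (subpath q.2 x2 w) x2 w : ℤ) ≤ k}

/-- As `HvwkPairs`, additionally requiring both edges `(a, v)` and `(w, b)`
on both paths (disjointness imposed on `P1[x1, a]` and `P2[b, y2]`),
defining `H_{av,wb,k}`. -/
def HavwbkPairs (k : ℤ) (a v w b x1 y1 x2 y2 : V) : Set (List V × List V) :=
  {q | IsShortestPath E ℓ q.1 x1 y1 ∧ IsShortestPath E ℓ q.2 x2 y2 ∧
       Precedes q.1 v w ∧ Precedes q.2 v w ∧
       (a, v) ∈ pathEdges q.1 ∧ (a, v) ∈ pathEdges q.2 ∧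
       (w, b) ∈ pathEdges q.1 ∧ (w, b) ∈ pathEdges q.2 ∧
       InternallyDisjoint (subpath q.1 x1 a) x1 a (subpath q.2 b y2) b y2 ∧
       (gamma E ℓ (subpath q.1 v y1) v y1 (subpath q.2 x2 w) x2 w : ℤ) ≤ k}


set_option linter.unusedSectionVars false
section Helpers
open List

lemma mem_take_iff_idx {α : Type*} [DecidableEq α] {l : List α} {u : α} {n : ℕ} :
    u ∈ l.take n ↔ u ∈ l ∧ l.idxOf u < n := by
  constructor
  · intro h
    have hu : u ∈ l := mem_of_mem_take h
    refine ⟨hu, ?_⟩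
    have h1 : idxOf u (l.take n ++ l.drop n) = idxOf u (l.take n) :=
      idxOf_append_of_mem h
    rw [take_append_drop] at h1
    calc l.idxOf u = idxOf u (l.take n) := h1
      _ < (l.take n).length := idxOf_lt_length_iff.2 h
      _ ≤ n := by simp
  · rintro ⟨hu, hlt⟩
    have h1 : l.idxOf u < l.length := idxOf_lt_length_iff.2 hu
    have h2 : (l.take n)[l.idxOf u]'(by simp; omega) = l[l.idxOf u] :=
      List.getElem_take
    rw [List.getElem_idxOf h1] at h2
    exact h2 ▸ List.getElem_mem _

lemma mem_drop_iff_idx {α : Type*} [DecidableEq α] {l : List α} (hn : l.Nodup)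
    {u : α} {n : ℕ} : u ∈ l.drop n ↔ u ∈ l ∧ n ≤ l.idxOf u := by
  have hdisj : (l.take n).Disjoint (l.drop n) := by
    have : (l.take n ++ l.drop n).Nodup := by rw [take_append_drop]; exact hn
    exact fun a ha hb => (nodup_append.mp this).2.2 a ha a hb rfl
  constructor
  · intro h
    have hu : u ∈ l := mem_of_mem_drop h
    refine ⟨hu, ?_⟩
    by_contra hc
    push_neg at hc
    exact hdisj (mem_take_iff_idx.2 ⟨hu, hc⟩) h
  · rintro ⟨hu, hle⟩
    have : u ∈ l.take n ++ l.drop n := by rw [take_append_drop]; exact hu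
    rcases mem_append.mp this with h | h
    · exact absurd (mem_take_iff_idx.1 h).2 (by omega)
    · exact h

lemma mem_of_getLast?_eq {α : Type*} {l : List α} {y : α}
    (h : l.getLast? = some y) : y ∈ l := by
  obtain ⟨hne, hy⟩ := List.mem_getLast?_eq_getLast (Option.mem_def.2 h)
  rw [hy]; exact List.getLast_mem hne

lemma mem_of_head?_eq {α : Type*} {l : List α} {x : α}
    (h : l.head? = some x) : x ∈ l := by
  cases l with
  | nil => simp at h
  | cons a t => simp at h; subst h; exact List.mem_cons_self

lemma idx_head {α : Type*} [DecidableEq α] {l : List α} {x : α}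
    (h : l.head? = some x) : l.idxOf x = 0 := by
  cases l with
  | nil => simp at h
  | cons a t => simp at h; subst h; simp

lemma idx_last_add_one {α : Type*} [DecidableEq α] {l : List α} (hn : l.Nodup) {y : α}
    (h : l.getLast? = some y) : l.idxOf y + 1 = l.length := by
  have hne : l ≠ [] := by rintro rfl; simp at h
  have hy : y ∈ l := mem_of_getLast?_eq h
  have hlen : 0 < l.length := length_pos_iff.2 hne
  have h1 : l.getLast hne = y := by
    rw [getLast?_eq_getLast hne] at h; exact Option.some_injective _ h
  have h2 : l[l.length - 1]'(by omega) = y := by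
    rw [← getLast_eq_getElem]; exact h1
  have h3 : l[l.idxOf y]'(idxOf_lt_length_iff.2 hy) = y := getElem_idxOf _
  have h4 : l.idxOf y = l.length - 1 := by
    have := hn.getElem_inj_iff.mp (h3.trans h2.symm)
    exact this
  omega

lemma eq_last_of_idx_ge {α : Type*} [DecidableEq α] {l : List α} (hn : l.Nodup) {y u : α}
    (h : l.getLast? = some y) (hu : u ∈ l) (hge : l.idxOf y ≤ l.idxOf u) : u = y := by
  have hy : y ∈ l := mem_of_getLast?_eq h
  have h1 := idx_last_add_one hn h
  have h2 : l.idxOf u < l.length := idxOf_lt_length_iff.2 hu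
  exact (idxOf_inj hu).1 (by omega)

lemma eq_head_of_idx_zero {α : Type*} [DecidableEq α] {l : List α} {x u : α}
    (h : l.head? = some x) (hu : u ∈ l) (h0 : l.idxOf u = 0) : u = x := by
  have hx : x ∈ l := mem_of_head?_eq h
  exact (idxOf_inj hu).1 (by rw [h0, idx_head h])

end Helpers
section MainLemmas

variable (E : V → V → Prop) (ℓ : V → V → ℝ)

lemma mem_subpath_from_head {p : List V} {x v u : V} (hh : p.head? = some x) :
    u ∈ subpath p x v ↔ u ∈ p ∧ p.idxOf u ≤ p.idxOf v := by
  unfold subpath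
  rw [idx_head hh, List.drop_zero, mem_take_iff_idx, Nat.lt_succ_iff]

lemma mem_subpath_to_last {p : List V} (hn : p.Nodup) {y v u : V}
    (hl : p.getLast? = some y) :
    u ∈ subpath p v y ↔ u ∈ p ∧ p.idxOf v ≤ p.idxOf u := by
  unfold subpath
  rw [idx_last_add_one hn hl, List.take_length, mem_drop_iff_idx hn]

lemma mem_A_iff {x1 y1 x2 y2 u : V} :
    u ∈ ({x1, y1} ∩ {x2, y2} : Set V) ↔ (u = x1 ∨ u = y1) ∧ (u = x2 ∨ u = y2) := by
  simp [Set.mem_inter_iff]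

lemma sp_nodup {p : List V} {x y : V} (h : IsShortestPath E ℓ p x y) : p.Nodup :=
  h.1.1.2.1

lemma sp_head {p : List V} {x y : V} (h : IsShortestPath E ℓ p x y) :
    p.head? = some x := h.1.2.1

lemma sp_last {p : List V} {x y : V} (h : IsShortestPath E ℓ p x y) :
    p.getLast? = some y := h.1.2.2

lemma Dv_aux {x1 y1 x2 y2 v w : V} {q : List V × List V}
    (hv : v ∉ ({x1, y1} ∩ {x2, y2} : Set V))
    (hqv : q ∈ DvPairs E ℓ v x1 y1 x2 y2) (hqw : q ∈ DvPairs E ℓ w x1 y1 x2 y2)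
    (hne : v ≠ w) (hle : q.1.idxOf v ≤ q.1.idxOf w) : False := by
  obtain ⟨hs1, hs2, hv1, hv2, -, -⟩ := hqv
  obtain ⟨-, -, hw1, hw2, hd1, hd2⟩ := hqw
  have hn2 := sp_nodup E ℓ hs2
  have hvp1w : v ∈ subpath q.1 x1 w :=
    (mem_subpath_from_head (sp_head E ℓ hs1)).2 ⟨hv1, hle⟩
  rcases le_total (q.2.idxOf v) (q.2.idxOf w) with h | h
  · have hm := hd1 v hvp1w ((mem_subpath_from_head (sp_head E ℓ hs2)).2 ⟨hv2, h⟩)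
    rw [mem_A_iff] at hm
    apply hv
    rw [mem_A_iff]
    rcases hm with ⟨h1 | h1, h2 | h2⟩ <;> first
      | exact ⟨Or.inl h1, Or.inl h2⟩
      | exact absurd h1 hne | exact absurd h2 hne
  · have hm := hd2 v hvp1w ((mem_subpath_to_last hn2 (sp_last E ℓ hs2)).2 ⟨hv2, h⟩)
    simp only [Set.mem_inter_iff, Set.mem_insert_iff, Set.mem_singleton_iff] at hm
    apply hv
    rw [mem_A_iff]
    rcases hm with ⟨h1 | h1, h2 | h2⟩
    · exact absurd h2 hne
    · exact ⟨Or.inl h1, Or.inr h2⟩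
    · exact absurd h1 hne
    · exact absurd h1 hne

lemma Dv_unique {x1 y1 x2 y2 v w : V} {q : List V × List V}
    (hv : v ∉ ({x1, y1} ∩ {x2, y2} : Set V)) (hw : w ∉ ({x1, y1} ∩ {x2, y2} : Set V))
    (hqv : q ∈ DvPairs E ℓ v x1 y1 x2 y2) (hqw : q ∈ DvPairs E ℓ w x1 y1 x2 y2) :
    v = w := by
  by_contra hne
  rcases le_total (q.1.idxOf v) (q.1.idxOf w) with h | h
  · exact Dv_aux E ℓ hv hqv hqw hne h
  · exact Dv_aux E ℓ hw hqw hqv (Ne.symm hne) h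

lemma Dv_exists {x1 y1 x2 y2 : V} {q : List V × List V}
    (hs1 : IsShortestPath E ℓ q.1 x1 y1) (hs2 : IsShortestPath E ℓ q.2 x2 y2)
    (hnd : ¬ InternallyDisjoint q.1 x1 y1 q.2 x2 y2) :
    ∃ v, v ∉ ({x1, y1} ∩ {x2, y2} : Set V) ∧ q ∈ DvPairs E ℓ v x1 y1 x2 y2 := by
  have hn1 := sp_nodup E ℓ hs1
  have hn2 := sp_nodup E ℓ hs2
  have hh1 := sp_head E ℓ hs1
  have hh2 := sp_head E ℓ hs2
  have hl1 := sp_last E ℓ hs1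
  have hl2 := sp_last E ℓ hs2
  unfold InternallyDisjoint at hnd
  push_neg at hnd
  obtain ⟨u0, hu01, hu02, hu0A⟩ := hnd
  obtain ⟨v, ⟨hv1, hv2, hvA⟩, hmin⟩ :=
    Set.exists_min_image
      {u | u ∈ q.1 ∧ u ∈ q.2 ∧ u ∉ ({x1, y1} ∩ {x2, y2} : Set V)}
      (fun u => q.1.idxOf u) (Set.toFinite _) ⟨u0, hu01, hu02, hu0A⟩
  have key1 : ∀ u, u ∈ q.1 → q.1.idxOf u ≤ q.1.idxOf v → u ≠ v →
      u ∈ ({x1, y1} ∩ {x2, y2} : Set V) → u = x1 := by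
    intro u hup1 hle1 huv huA
    rcases (mem_A_iff.1 huA).1 with h | h
    · exact h
    · exfalso
      apply huv
      have hvy : v = y1 := eq_last_of_idx_ge hn1 hl1 hv1 (by rw [← h]; exact hle1)
      rw [h, hvy]
  have keymin : ∀ u, u ∈ q.1 → u ∈ q.2 → q.1.idxOf u ≤ q.1.idxOf v →
      u ∉ ({x1, y1} ∩ {x2, y2} : Set V) → u = v := by
    intro u hup1 hup2 hle1 huA
    have := hmin u ⟨hup1, hup2, huA⟩
    exact (List.idxOf_inj hup1).1 (le_antisymm hle1 this)
  refine ⟨v, hvA, hs1, hs2, hv1, hv2, ?_, ?_⟩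
  · intro u hu1 hu2
    rw [mem_subpath_from_head hh1] at hu1
    rw [mem_subpath_from_head hh2] at hu2
    obtain ⟨hup1, hle1⟩ := hu1
    obtain ⟨hup2, hle2⟩ := hu2
    by_cases huv : u = v
    · subst huv
      simp [Set.mem_inter_iff]
    · by_cases huA : u ∈ ({x1, y1} ∩ {x2, y2} : Set V)
      · have h1 : u = x1 := key1 u hup1 hle1 huv huA
        have h2 : u = x2 := by
          rcases (mem_A_iff.1 huA).2 with h | h
          · exact h
          · exfalso
            apply huv
            have hvy : v = y2 := eq_last_of_idx_ge hn2 hl2 hv2 (by rw [← h]; exact hle2)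
            rw [h, hvy]
        exact ⟨by simp [h1], by simp [h2]⟩
      · exact absurd (keymin u hup1 hup2 hle1 huA) huv
  · intro u hu1 hu2
    rw [mem_subpath_from_head hh1] at hu1
    rw [mem_subpath_to_last hn2 hl2] at hu2
    obtain ⟨hup1, hle1⟩ := hu1
    obtain ⟨hup2, hge2⟩ := hu2
    by_cases huv : u = v
    · subst huv
      simp [Set.mem_inter_iff]
    · by_cases huA : u ∈ ({x1, y1} ∩ {x2, y2} : Set V)
      · have h1 : u = x1 := key1 u hup1 hle1 huv huA
        have h2 : u = y2 := by
          rcases (mem_A_iff.1 huA).2 with h | h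
          · exfalso
            apply huv
            have h0 : q.2.idxOf u = 0 := by rw [h, idx_head hh2]
            have hv0 : q.2.idxOf v = 0 := by omega
            have : v = x2 := eq_head_of_idx_zero hh2 hv2 hv0
            rw [h, this]
          · exact h
        exact ⟨by simp [h1], by simp [h2]⟩
      · exact absurd (keymin u hup1 hup2 hle1 huA) huv

lemma sp_finite (x y : V) : {p : List V | IsShortestPath E ℓ p x y}.Finite :=
  (List.finite_length_le V (Fintype.card V)).subset
    fun p hp => (sp_nodup E ℓ hp).length_le_card

lemma cover (x1 y1 x2 y2 : V) :
    ({p : List V | IsShortestPath E ℓ p x1 y1} ×ˢ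
        {p : List V | IsShortestPath E ℓ p x2 y2} : Set (List V × List V)) =
      disjPairs E ℓ x1 y1 x2 y2 ∪
        ⋃ v ∈ (({x1, y1} ∩ {x2, y2} : Set V))ᶜ, DvPairs E ℓ v x1 y1 x2 y2 := by
  ext q
  simp only [Set.mem_prod, Set.mem_setOf_eq, Set.mem_union, Set.mem_iUnion,
    Set.mem_compl_iff, exists_prop]
  constructor
  · rintro ⟨h1, h2⟩
    by_cases hd : InternallyDisjoint q.1 x1 y1 q.2 x2 y2
    · exact Or.inl ⟨h1, h2, hd⟩
    · obtain ⟨v, hvA, hv⟩ := Dv_exists E ℓ h1 h2 hd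
      exact Or.inr ⟨v, hvA, hv⟩
  · rintro (⟨h1, h2, -⟩ | ⟨v, -, h⟩)
    · exact ⟨h1, h2⟩
    · exact ⟨h.1, h.2.1⟩

end MainLemmas
/-- For any vertices `x1, y1, x2, y2`,
`F_disj(x1, y1, x2, y2) = F(x1, y1)·F(x2, y2) − Σ_{v ∉ {x1,y1} ∩ {x2,y2}} D_v(x1, y1, x2, y2)`. -/
theorem Fdisj_eq_FF_sub_sum_Dv
    (F : Type*) [Field F] [CharP F 2]
    (hG : NoNonposCycle E ℓ) (x1 y1 x2 y2 : V) :
    enumPoly2 F (disjPairs E ℓ x1 y1 x2 y2) =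
      Fpoly F E ℓ x1 y1 * Fpoly F E ℓ x2 y2 -
        ∑ᶠ v ∈ (({x1, y1} ∩ {x2, y2} : Set V))ᶜ,
          enumPoly2 F (DvPairs E ℓ v x1 y1 x2 y2) := by
  classical
  have hP1 : {p : List V | IsShortestPath E ℓ p x1 y1}.Finite := sp_finite E ℓ x1 y1
  have hP2 : {p : List V | IsShortestPath E ℓ p x2 y2}.Finite := sp_finite E ℓ x2 y2
  have hprodfin : ({p : List V | IsShortestPath E ℓ p x1 y1} ×ˢ
      {p : List V | IsShortestPath E ℓ p x2 y2}).Finite := hP1.prod hP2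
  have hsubD : disjPairs E ℓ x1 y1 x2 y2 ⊆
      {p : List V | IsShortestPath E ℓ p x1 y1} ×ˢ
        {p : List V | IsShortestPath E ℓ p x2 y2} := fun q hq => ⟨hq.1, hq.2.1⟩
  have hsubDv : ∀ v : V, DvPairs E ℓ v x1 y1 x2 y2 ⊆
      {p : List V | IsShortestPath E ℓ p x1 y1} ×ˢ
        {p : List V | IsShortestPath E ℓ p x2 y2} := fun v q hq => ⟨hq.1, hq.2.1⟩
  have hUfin : (⋃ v ∈ (({x1, y1} ∩ {x2, y2} : Set V))ᶜ,
      DvPairs E ℓ v x1 y1 x2 y2).Finite :=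
    Set.Finite.biUnion (Set.toFinite _) fun v _ => hprodfin.subset (hsubDv v)
  have hdisjU : Disjoint (disjPairs E ℓ x1 y1 x2 y2)
      (⋃ v ∈ (({x1, y1} ∩ {x2, y2} : Set V))ᶜ, DvPairs E ℓ v x1 y1 x2 y2) := by
    rw [Set.disjoint_left]
    intro q hq hq'
    simp only [Set.mem_iUnion, Set.mem_compl_iff, exists_prop] at hq'
    obtain ⟨v, hvA, hv⟩ := hq'
    exact hvA (hq.2.2 v hv.2.2.1 hv.2.2.2.1)
  have hpw : ((({x1, y1} ∩ {x2, y2} : Set V))ᶜ).PairwiseDisjoint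
      (fun v => DvPairs E ℓ v x1 y1 x2 y2) := by
    intro v hv w hw hne
    rw [Function.onFun, Set.disjoint_left]
    intro q hqv hqw
    exact hne (Dv_unique E ℓ hv hw hqv hqw)
  have hprod : Fpoly F E ℓ x1 y1 * Fpoly F E ℓ x2 y2 =
      ∑ᶠ q ∈ ({p : List V | IsShortestPath E ℓ p x1 y1} ×ˢ
          {p : List V | IsShortestPath E ℓ p x2 y2} : Set (List V × List V)),
        pathMon F q.1 * pathMon F q.2 := by
    simp only [Fpoly, enumPoly]
    rw [finsum_mem_eq_finite_toFinset_sum _ hP1, finsum_mem_eq_finite_toFinset_sum _ hP2,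
      finsum_mem_eq_finite_toFinset_sum _ (hP1.prod hP2), ← Set.Finite.toFinset_prod,
      Finset.sum_product, Finset.sum_mul_sum]
  have hsplit : (∑ᶠ q ∈ ({p : List V | IsShortestPath E ℓ p x1 y1} ×ˢ
          {p : List V | IsShortestPath E ℓ p x2 y2} : Set (List V × List V)),
        pathMon F q.1 * pathMon F q.2) =
      enumPoly2 F (disjPairs E ℓ x1 y1 x2 y2) +
        ∑ᶠ v ∈ (({x1, y1} ∩ {x2, y2} : Set V))ᶜ,
          enumPoly2 F (DvPairs E ℓ v x1 y1 x2 y2) := by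
    simp only [enumPoly2]
    rw [cover E ℓ x1 y1 x2 y2,
      finsum_mem_union hdisjU (hprodfin.subset hsubD) hUfin,
      finsum_mem_biUnion hpw (Set.toFinite _)
        (fun v _ => hprodfin.subset (hsubDv v))]
  rw [hprod, hsplit, add_sub_cancel_right]

end DSP
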